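/- Let α ∈ (1,2), c > 0, q ≥ 0 and s ∈ ℝ with (s + c)^α > q + c^α. Then ∫₀^∞ e^{−s x} · e^{−c x} x^{α−1} (∑_{k=0}^∞ ((q + c^α) x^α)^k / Γ(α + α k)) dx = 1 / ((s + c)^α − c^α − q). -/

import Mathlib

open MeasureTheory Set

lemma aux_integrable {b p : ℝ} (hb : 0 < b) (hp : 0 < p) :
    IntegrableOn (fun x : ℝ => x ^ (p - 1) * Real.exp (-(b * x))) (Ioi 0) := by
  have := integrableOn_rpow_mul_exp_neg_mul_rpow (p := 1) (s := p - 1) (b := b)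
    (by linarith) one_pos hb
  refine this.congr_fun (fun x hx => ?_) measurableSet_Ioi
  dsimp only
  rw [Real.rpow_one, neg_mul]

lemma aux_integral {b p : ℝ} (hb : 0 < b) (hp : 0 < p) :
    ∫ x in Ioi (0:ℝ), x ^ (p - 1) * Real.exp (-(b * x)) = (1 / b) ^ p * Real.Gamma p :=
  Real.integral_rpow_mul_exp_neg_mul_Ioi hp hb

theorem stmt_19 (α c q s : ℝ) (hα1 : 1 < α) (hα2 : α < 2) (hc : 0 < c) (hq : 0 ≤ q)
    (hsc : 0 < s + c) (h : q + c ^ α < (s + c) ^ α) :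
    ∫ x in Ioi (0 : ℝ),
        Real.exp (-s * x)
          * (Real.exp (-c * x) * x ^ (α - 1)
              * ∑' k : ℕ, ((q + c ^ α) * x ^ α) ^ k / Real.Gamma (α + α * k))
      = 1 / ((s + c) ^ α - c ^ α - q) := by
  set a : ℝ := q + c ^ α with ha_def
  set b : ℝ := s + c with hb_def
  have ha : 0 < a := add_pos_of_nonneg_of_pos hq (Real.rpow_pos_of_pos hc α)
  have hbα : 0 < b ^ α := Real.rpow_pos_of_pos hsc α
  have hp : ∀ k : ℕ, 0 < α + α * k := fun k => by positivity
  set F : ℕ → ℝ → ℝ := fun k x =>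
    (a ^ k / Real.Gamma (α + α * k)) * (x ^ (α + α * k - 1) * Real.exp (-(b * x))) with hF
  -- value of each integral
  have hFint : ∀ k : ℕ, ∫ x in Ioi (0:ℝ), F k x = a ^ k * (1 / b) ^ (α + α * k) := by
    intro k
    rw [hF]
    simp only
    rw [integral_const_mul, aux_integral hsc (hp k)]
    have hΓ : Real.Gamma (α + α * k) ≠ 0 := (Real.Gamma_pos_of_pos (hp k)).ne'
    field_simp
  have hFintegrable : ∀ k : ℕ, IntegrableOn (F k) (Ioi 0) :=
    fun k => (aux_integrable hsc (hp k)).const_mul _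
  -- the summed integrals form a geometric series
  have hterm : ∀ k : ℕ, a ^ k * (1 / b) ^ (α + α * k)
      = (1 / b ^ α) * (a / b ^ α) ^ k := by
    intro k
    have hb1 : (0:ℝ) < 1 / b := by positivity
    rw [Real.rpow_add hb1, Real.rpow_mul hb1.le, Real.rpow_natCast,
      one_div, Real.inv_rpow hsc.le]
    rw [div_pow]
    field_simp
    rw [← mul_pow, one_div, inv_mul_cancel₀ hbα.ne', one_pow]
  have hr : |a / b ^ α| < 1 := by
    rw [abs_of_pos (by positivity), div_lt_one hbα]; linarith
  have hsum : Summable (fun k : ℕ => a ^ k * (1 / b) ^ (α + α * k)) := by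
    simp_rw [hterm]
    exact (summable_geometric_of_abs_lt_one hr).mul_left _
  have hnorm : ∀ k : ℕ, ∫ x in Ioi (0:ℝ), ‖F k x‖ = ∫ x in Ioi (0:ℝ), F k x := by
    intro k
    refine setIntegral_congr_fun measurableSet_Ioi (fun x hx => ?_)
    rw [Real.norm_eq_abs, abs_of_nonneg]
    have hx0 : 0 < x := hx
    have := Real.Gamma_pos_of_pos (hp k)
    positivity
  -- rewrite the integrand as a tsum of F k
  have hcong : ∫ x in Ioi (0:ℝ),
        Real.exp (-s * x) * (Real.exp (-c * x) * x ^ (α - 1)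
          * ∑' k : ℕ, (a * x ^ α) ^ k / Real.Gamma (α + α * k))
      = ∫ x in Ioi (0:ℝ), ∑' k : ℕ, F k x := by
    refine setIntegral_congr_fun measurableSet_Ioi (fun x hx => ?_)
    have hx0 : (0:ℝ) < x := hx
    rw [← tsum_mul_left, ← tsum_mul_left]
    refine tsum_congr (fun k => ?_)
    rw [hF]
    simp only
    have h1 : (a * x ^ α) ^ k = a ^ k * x ^ (α * k) := by
      rw [mul_pow, Real.rpow_mul hx0.le, Real.rpow_natCast]
    have h2 : x ^ (α - 1) * x ^ (α * k) = x ^ (α + α * k - 1) := by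
      rw [← Real.rpow_add hx0, sub_add_eq_add_sub]
    have h3 : Real.exp (-s * x) * Real.exp (-c * x) = Real.exp (-(b * x)) := by
      rw [← Real.exp_add, hb_def]; ring_nf
    calc Real.exp (-s * x) * (Real.exp (-c * x) * x ^ (α - 1)
            * ((a * x ^ α) ^ k / Real.Gamma (α + α * k)))
        = (a ^ k / Real.Gamma (α + α * k)) *
            ((x ^ (α - 1) * x ^ (α * k)) * (Real.exp (-s * x) * Real.exp (-c * x))) := by
          rw [h1]; ring
      _ = (a ^ k / Real.Gamma (α + α * k)) * (x ^ (α + α * k - 1) * Real.exp (-(b * x))) := by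
          rw [h2, h3]
  rw [hcong]
  rw [← integral_tsum_of_summable_integral_norm hFintegrable (by simp only [hnorm, hFint]; exact hsum)]
  simp_rw [hFint, hterm]
  rw [tsum_mul_left, tsum_geometric_of_abs_lt_one hr]
  have hne : b ^ α - a ≠ 0 := by linarith
  have hrhs : (s + c) ^ α - c ^ α - q = b ^ α - a := by rw [ha_def, hb_def]; ring
  rw [hrhs]
  field_simp
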